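/- Let k be a transition kernel on a Polish space Ω, α > 0, and let {B_n : n ∈ ℕ} be a countable basis of the topology of Ω that is closed under finite unions. Then {x : k₊(x,Ω) > α} = ⋃_{n∈ℕ} {x : k(x,B_n) > α}, where k₊(x,·) is the positive part of the signed measure k(x,·). -/

import Mathlib

open MeasureTheory Topology Filter
open scoped NNReal ENNReal BoundedContinuousFunction

noncomputable def sInt {Ω : Type*} [MeasurableSpace Ω] (μ : SignedMeasure Ω) (f : Ω → ℝ) : ℝ :=
  (∫ x, f x ∂μ.toJordanDecomposition.posPart) - ∫ x, f x ∂μ.toJordanDecomposition.negPart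

def IsTransKernel {Ω : Type*} [MeasurableSpace Ω] (k : Ω → SignedMeasure Ω) : Prop :=
  ∀ A : Set Ω, MeasurableSet A → Measurable fun x => k x A

def IsBddKernel {Ω : Type*} [MeasurableSpace Ω] (k : Ω → SignedMeasure Ω) : Prop :=
  IsTransKernel k ∧ ∃ C : ℝ≥0, ∀ x, (k x).totalVariation Set.univ ≤ C

def GivenByKernel {Ω : Type*} [MeasurableSpace Ω]
    (T : SignedMeasure Ω →ₗ[ℝ] SignedMeasure Ω) (k : Ω → SignedMeasure Ω) : Prop :=
  ∀ (μ : SignedMeasure Ω) (A : Set Ω), MeasurableSet A → T μ A = sInt μ (fun x => k x A)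

def IsBdMeasurable {Ω : Type*} [MeasurableSpace Ω] (f : Ω → ℝ) : Prop :=
  Measurable f ∧ ∃ C : ℝ, ∀ x, |f x| ≤ C

instance totalVariation_isFiniteMeasure {Ω : Type*} [MeasurableSpace Ω] (μ : SignedMeasure Ω) :
    IsFiniteMeasure μ.totalVariation := by
  unfold SignedMeasure.totalVariation; infer_instance

lemma signedMeasure_apply_eq {Ω : Type*} [MeasurableSpace Ω] (s : SignedMeasure Ω) {i : Set Ω}
    (hi : MeasurableSet i) :
    s i = (s.toJordanDecomposition.posPart i).toReal -
      (s.toJordanDecomposition.negPart i).toReal := by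
  conv_lhs => rw [← s.toSignedMeasure_toJordanDecomposition]
  rw [JordanDecomposition.toSignedMeasure, Measure.toSignedMeasure_sub_apply hi]
  rfl

theorem stmt10 {Ω : Type*} [TopologicalSpace Ω] [PolishSpace Ω] [MeasurableSpace Ω] [BorelSpace Ω]
    (k : Ω → SignedMeasure Ω) (hk : IsTransKernel k) (α : ℝ) (hα : 0 < α)
    (B : ℕ → Set Ω) (hB : TopologicalSpace.IsTopologicalBasis (Set.range B))
    (hBunion : ∀ n m : ℕ, ∃ j : ℕ, B j = B n ∪ B m) :
    {x : Ω | ENNReal.ofReal α < (k x).toJordanDecomposition.posPart Set.univ} =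
      ⋃ n : ℕ, {x : Ω | α < k x (B n)} := by
  classical
  have hBopen : ∀ n, IsOpen (B n) := fun n => hB.isOpen ⟨n, rfl⟩
  have hBmeas : ∀ n, MeasurableSet (B n) := fun n => (hBopen n).measurableSet
  ext x
  set P := (k x).toJordanDecomposition.posPart with hPdef
  set N := (k x).toJordanDecomposition.negPart with hNdef
  have happly : ∀ {A : Set Ω}, MeasurableSet A → k x A = (P A).toReal - (N A).toReal :=
    fun hA => signedMeasure_apply_eq (k x) hA
  simp only [Set.mem_setOf_eq, Set.mem_iUnion]
  constructor
  · intro hx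
    -- Hahn decomposition set
    obtain ⟨i, hi₁, hi₂, hi₃, hP, hN⟩ := (k x).toJordanDecomposition_spec
    have hNi : N i = 0 := by
      rw [hNdef, hN, SignedMeasure.toMeasureOfLEZero_apply _ hi₃ hi₁.compl hi₁]
      simp
    have hPuniv : P Set.univ = P i := by
      rw [hPdef, hP, SignedMeasure.toMeasureOfZeroLE_apply _ hi₂ hi₁ MeasurableSet.univ,
        SignedMeasure.toMeasureOfZeroLE_apply _ hi₂ hi₁ hi₁]
      simp
    have hPfin : P Set.univ ≠ ∞ := measure_ne_top _ _
    set ε : ℝ≥0∞ := P Set.univ - ENNReal.ofReal α with hεdef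
    have hε0 : 0 < ε := tsub_pos_of_lt hx
    obtain ⟨U, hiU, hUopen, hNU⟩ := Set.exists_isOpen_lt_of_lt (μ := N) i ε (by
      rw [hNi]; exact hε0)
    have hUmeas : MeasurableSet U := hUopen.measurableSet
    -- k x U > α
    have hPU : P Set.univ ≤ P U := by rw [hPuniv]; exact measure_mono hiU
    have hkU : α < k x U := by
      rw [happly hUmeas]
      have h1 : α ≤ (P U).toReal - (N U).toReal → True := fun _ => trivial
      have hNUfin : N U ≠ ∞ := measure_ne_top _ _
      have hNUlt : (N U).toReal < (P Set.univ).toReal - α := by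
        have := ENNReal.toReal_lt_toReal hNUfin (by
          exact (tsub_le_self.trans_lt hPfin.lt_top).ne) |>.mpr hNU
        rwa [ENNReal.toReal_sub_of_le hx.le hPfin, ENNReal.toReal_ofReal hα.le] at this
      have hPle : (P Set.univ).toReal ≤ (P U).toReal :=
        ENNReal.toReal_le_toReal hPfin (measure_ne_top _ _) |>.mpr hPU
      linarith
    -- U is covered by basic sets contained in it
    by_cases hT : ∃ m, B m ⊆ U
    · obtain ⟨m₀, hm₀⟩ := hT
      set c : ℕ → ℕ := fun m => if B m ⊆ U then m else m₀ with hc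
      have hcsub : ∀ m, B (c m) ⊆ U := by
        intro m; simp only [hc]; split_ifs with h; exacts [h, hm₀]
      -- recursive fold
      have hrec : ∃ j : ℕ → ℕ, j 0 = c 0 ∧ ∀ n, B (j (n + 1)) = B (j n) ∪ B (c (n + 1)) := by
        refine ⟨fun n => Nat.rec (c 0) (fun n jn => (hBunion jn (c (n + 1))).choose) n, rfl,
          fun n => (hBunion _ (c (n + 1))).choose_spec⟩
      obtain ⟨j, hj0, hjS⟩ := hrec
      have hjsub : ∀ n, B (j n) ⊆ U := by
        intro n; induction n with
        | zero => rw [hj0]; exact hcsub 0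
        | succ n ih => rw [hjS n]; exact Set.union_subset ih (hcsub (n + 1))
      have hmono : Monotone fun n => B (j n) := by
        apply monotone_nat_of_le_succ
        intro n; rw [hjS n]; exact Set.subset_union_left
      have hcj : ∀ m, B (c m) ⊆ B (j m) := by
        intro m; cases m with
        | zero => rw [hj0]
        | succ m => rw [hjS m]; exact Set.subset_union_right
      have hUnion : ⋃ n, B (j n) = U := by
        apply Set.Subset.antisymm (Set.iUnion_subset hjsub)
        intro y hy
        obtain ⟨b, ⟨m, rfl⟩, hyb, hbU⟩ := hB.exists_subset_of_mem_open hy hUopen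
        have : c m = m := by simp [hc, hbU]
        refine Set.mem_iUnion.mpr ⟨m, hcj m ?_⟩
        rw [this]; exact hyb
      -- continuity from below
      have htP : Tendsto (fun n => (P (B (j n))).toReal) atTop (𝓝 ((P U).toReal)) := by
        have := tendsto_measure_iUnion_atTop (μ := P) hmono
        rw [hUnion] at this
        exact (ENNReal.tendsto_toReal (measure_ne_top _ _)).comp this
      have htN : Tendsto (fun n => (N (B (j n))).toReal) atTop (𝓝 ((N U).toReal)) := by
        have := tendsto_measure_iUnion_atTop (μ := N) hmono
        rw [hUnion] at this
        exact (ENNReal.tendsto_toReal (measure_ne_top _ _)).comp this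
      have htk : Tendsto (fun n => k x (B (j n))) atTop (𝓝 (k x U)) := by
        have := htP.sub htN
        rw [← happly hUmeas] at this
        refine this.congr fun n => (happly (hBmeas (j n))).symm
      obtain ⟨n, hn⟩ := (htk.eventually (eventually_gt_nhds hkU)).exists
      exact ⟨j n, hn⟩
    · -- U empty
      push_neg at hT
      exfalso
      have hUempty : U = ∅ := by
        rw [Set.eq_empty_iff_forall_notMem]
        intro y hy
        obtain ⟨b, ⟨m, rfl⟩, _, hbU⟩ := hB.exists_subset_of_mem_open hy hUopen
        exact hT m hbU
      rw [hUempty] at hkU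
      simp only [VectorMeasure.empty] at hkU
      linarith
  · rintro ⟨n, hn⟩
    rw [happly (hBmeas n)] at hn
    have h1 : α < (P (B n)).toReal := by
      have := ENNReal.toReal_nonneg (a := N (B n)); linarith
    have h2 : (P (B n)).toReal ≤ (P Set.univ).toReal :=
      ENNReal.toReal_le_toReal (measure_ne_top _ _) (measure_ne_top _ _) |>.mpr
        (measure_mono (Set.subset_univ _))
    have h3 : α < (P Set.univ).toReal := lt_of_lt_of_le h1 h2
    rw [← ENNReal.ofReal_toReal (measure_ne_top P Set.univ)]
    exact (ENNReal.ofReal_lt_ofReal_iff (lt_trans hα h3)).mpr h3
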